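/- Let ε be a real number with 0 < ε. In the two-qubit Hilbert space ℂ² ⊗ ℂ², modeled as the Euclidean space of functions (Fin 2 × Fin 2) → ℂ, let ψ_f be the vector with components ψ_f(0,0) = 1, ψ_f(1,1) = ε, and ψ_f(0,1) = ψ_f(1,0) = 0 (the Bell state |00⟩ + |11⟩ after Alice applies the non-unitary gate diag(1, ε) to her qubit). Then Bob's manually-normalized probabilities of measuring his qubit (the second index) to be 0 or 1 are: (∑_{i} |ψ_f(i,0)|²) / ‖ψ_f‖² = 1/(1+ε²) and (∑_{i} |ψ_f(i,1)|²) / ‖ψ_f‖² = ε²/(1+ε²). -/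
import Mathlib

/-- In the two-qubit space `EuclideanSpace ℂ (Fin 2 × Fin 2)`,
let `ψf = |00⟩ + ε|11⟩` (with `ε > 0`) be the Bell state after Alice applies
the non-unitary gate `diag(1, ε)` to her qubit. Under global manual
normalization, Bob's probabilities of measuring `0` and `1` on his qubit
(the second index) are `1/(1+ε²)` and `ε²/(1+ε²)` respectively. -/
theorem manual_normalization_ftl_signalling_probabilities
    (ε : ℝ) (hε : 0 < ε)
    (ψf : EuclideanSpace ℂ (Fin 2 × Fin 2))
    (h00 : ψf (0, 0) = 1) (h11 : ψf (1, 1) = (ε : ℂ))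
    (h01 : ψf (0, 1) = 0) (h10 : ψf (1, 0) = 0) :
    (∑ i : Fin 2, ‖ψf (i, 0)‖ ^ 2) / ‖ψf‖ ^ 2 = 1 / (1 + ε ^ 2) ∧
      (∑ i : Fin 2, ‖ψf (i, 1)‖ ^ 2) / ‖ψf‖ ^ 2 = ε ^ 2 / (1 + ε ^ 2) := by
  have hnorm : ‖ψf‖ ^ 2 = 1 + ε ^ 2 := by
    have h := EuclideanSpace.norm_eq ψf
    rw [h, Real.sq_sqrt (by positivity)]
    rw [Fintype.sum_prod_type, Fin.sum_univ_two, Fin.sum_univ_two, Fin.sum_univ_two,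
      h00, h01, h10, h11]
    simp [Complex.norm_real, abs_of_pos hε]
  rw [hnorm, Fin.sum_univ_two, Fin.sum_univ_two, h00, h01, h10, h11]
  constructor <;> simp [Complex.norm_real, abs_of_pos hε]
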